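/- Let s ≥ 2 and let (H_n)_{n≥1} be the intertwining sequence of s sequences (η^{(j)}_i)_{i≥0} ⊂ ℂ (j = 1,…,s) of pairwise distinct elements. Suppose binom(d+s,s) < N < binom(d+1+s,s) for some d ≥ 0, so that k(N) = (k_1,…,k_m,0,…,0) with 2 ≤ m ≤ s and k_m ≥ 1. Then for every z = (z_1,…,z_s) ∈ ℂ^s one has VDM(H_1,…,H_N,z) = ∏_{j=1}^{m−2} [∏_{i=0}^{k_j−1} (z_j − η^{(j)}_i)] × ∏_{i=0}^{k_{m−1}} (z_{m−1} − η^{(m−1)}_i) × ∏_{i=0}^{k_m−2} (z_s − η^{(s)}_i) × VDM(H_1,…,H_N). -/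

import Mathlib

open Finset

/-- Graded lexicographic strict order on `ℕ^s`: first compare total degrees,
then compare lexicographically. -/
def GradedLexLt {s : ℕ} (k l : Fin s → ℕ) : Prop :=
  (∑ i, k i) < (∑ i, l i) ∨
    ((∑ i, k i) = (∑ i, l i) ∧ ∃ t : Fin s, (∀ u, u < t → k u = l u) ∧ k t < l t)

/-- Generalized Vandermonde determinant `det [e_i(G_j)]` where the monomials `e_i`
are given by the enumeration `kEnum` of `ℕ^s`. -/
noncomputable def VDM {s : ℕ} (kEnum : ℕ → Fin s → ℕ) {N : ℕ}
    (G : Fin N → Fin s → ℂ) : ℂ :=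
  Matrix.det (Matrix.of fun i j : Fin N => ∏ t, G j t ^ kEnum (i : ℕ) t)

lemma grlex_irrefl {s : ℕ} (k : Fin s → ℕ) : ¬ GradedLexLt k k := by
  rintro (h | ⟨-, t, -, ht⟩) <;> omega

lemma grlex_asymm {s : ℕ} {k l : Fin s → ℕ} (h1 : GradedLexLt k l) (h2 : GradedLexLt l k) :
    False := by
  rcases h1 with h1 | ⟨hs1, t1, hp1, ht1⟩
  · rcases h2 with h2 | ⟨hs2, -⟩ <;> omega
  · rcases h2 with h2 | ⟨hs2, t2, hp2, ht2⟩
    · omega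
    · rcases lt_trichotomy t1 t2 with h | h | h
      · have := hp2 t1 h; omega
      · subst h; omega
      · have := hp1 t2 h; omega

lemma grlex_sum_le {s : ℕ} {k l : Fin s → ℕ} (h : GradedLexLt k l) :
    (∑ i, k i) ≤ (∑ i, l i) := by
  rcases h with h | ⟨h, -⟩ <;> omega

lemma sum_lt_of_lex {s : ℕ} (v w : Fin s → ℕ) (t : Fin s)
    (hpre : ∀ u, u < t → v u = w u) (ht : v t < w t)
    (htail : ∀ u, t < u → v u = 0) :
    ∑ u, v u < ∑ u, w u := by
  classical
  have h1 : ∑ u, v u = ∑ u ∈ univ.filter (fun u => u ≤ t), v u := by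
    refine (Finset.sum_subset (filter_subset _ _) ?_).symm
    intro x _ hx
    simp only [mem_filter, mem_univ, true_and, not_le] at hx
    exact htail x hx
  have h2 : ∑ u ∈ univ.filter (fun u => u ≤ t), v u <
      ∑ u ∈ univ.filter (fun u => u ≤ t), w u := by
    refine Finset.sum_lt_sum (fun i hi => ?_) ⟨t, by simp, ht⟩
    · simp only [mem_filter, mem_univ, true_and] at hi
      rcases lt_or_eq_of_le hi with h | h
      · exact (hpre i h).le
      · subst h; exact ht.le
  calc ∑ u, v u = _ := h1
    _ < _ := h2
    _ ≤ ∑ u, w u := Finset.sum_le_sum_of_subset (filter_subset _ _)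

lemma expand_linear (η : ℕ → ℂ) (r : ℕ) :
    ∃ c : ℕ → ℂ, c r = 1 ∧
      ∀ x : ℂ, ∏ i ∈ range r, (x - η i) = ∑ a ∈ range (r + 1), c a * x ^ a := by
  classical
  set p : Polynomial ℂ := ∏ i ∈ range r, (Polynomial.X - Polynomial.C (η i)) with hp
  have hm : p.Monic := Polynomial.monic_prod_of_monic _ _ fun i _ => Polynomial.monic_X_sub_C _
  have hd : p.natDegree = r := by
    rw [hp, Polynomial.natDegree_prod_of_monic _ _ fun i _ => Polynomial.monic_X_sub_C _]
    simp [Polynomial.natDegree_X_sub_C]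
  refine ⟨p.coeff, by rw [← hd]; exact hm.coeff_natDegree, fun x => ?_⟩
  have h := Polynomial.eval_eq_sum_range (p := p) x
  rw [hd] at h
  rw [← h, hp]
  simp [Polynomial.eval_prod]

def Rvec {s : ℕ} (m : ℕ) (hm1s : m - 1 < s) (K : Fin s → ℕ) : Fin s → ℕ := fun j =>
  if (j : ℕ) < m - 2 then K j
  else if (j : ℕ) = m - 2 then K j + 1
  else if (j : ℕ) = s - 1 then K ⟨m - 1, hm1s⟩ - 1
  else 0

section Rvec
variable {s m : ℕ} (hs : 2 ≤ s) (hm2 : 2 ≤ m) (hms : m ≤ s) (hm1s : m - 1 < s) (K : Fin s → ℕ)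

lemma Rvec_lt {j : Fin s} (h : (j : ℕ) < m - 2) : Rvec m hm1s K j = K j := by
  simp [Rvec, h]

lemma Rvec_b (h : m - 2 < s) : Rvec m hm1s K ⟨m - 2, h⟩ = K ⟨m - 2, h⟩ + 1 := by
  simp [Rvec]

lemma Rvec_last (hs : 2 ≤ s) (hms : m ≤ s) (h : s - 1 < s) :
    Rvec m hm1s K ⟨s - 1, h⟩ = K ⟨m - 1, hm1s⟩ - 1 := by
  have h1 : ¬ (s - 1 < m - 2) := by omega
  have h2 : ¬ (s - 1 = m - 2) := by omega
  simp [Rvec, h1, h2]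

lemma Rvec_other {j : Fin s} (h1 : m - 2 < (j : ℕ)) (h2 : (j : ℕ) ≠ s - 1) :
    Rvec m hm1s K j = 0 := by
  have h3 : ¬ ((j : ℕ) < m - 2) := by omega
  have h4 : ¬ ((j : ℕ) = m - 2) := by omega
  simp [Rvec, h3, h4, h2]

end Rvec

lemma sum_Rvec {s m : ℕ} (hs : 2 ≤ s) (hm2 : 2 ≤ m) (hms : m ≤ s) (hm1s : m - 1 < s)
    (K : Fin s → ℕ) (hzero : ∀ j : Fin s, m ≤ (j : ℕ) → K j = 0)
    (hkm : 1 ≤ K ⟨m - 1, hm1s⟩) :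
    ∑ j, Rvec m hm1s K j = ∑ j, K j := by
  classical
  have hbs : m - 2 < s := by omega
  have hes : s - 1 < s := by omega
  set jb : Fin s := ⟨m - 2, hbs⟩ with hjb
  set jc : Fin s := ⟨m - 1, hm1s⟩ with hjc
  set je : Fin s := ⟨s - 1, hes⟩ with hje
  set T : Finset (Fin s) := {jb, jc, je} with hT
  have hout : ∀ j : Fin s, j ∉ T → Rvec m hm1s K j = K j := by
    intro j hj
    simp only [hT, mem_insert, mem_singleton, not_or] at hj
    obtain ⟨h1, h2, h3⟩ := hj
    have hb : (j : ℕ) ≠ m - 2 := fun h => h1 (Fin.ext h)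
    have hc : (j : ℕ) ≠ m - 1 := fun h => h2 (Fin.ext h)
    have he : (j : ℕ) ≠ s - 1 := fun h => h3 (Fin.ext h)
    rcases lt_or_ge (j : ℕ) (m - 2) with h | h
    · exact Rvec_lt _ _ h
    · have hm : m ≤ (j : ℕ) := by omega
      rw [Rvec_other _ _ (by omega) he, hzero j hm]
  have hsplit : ∀ f : Fin s → ℕ, ∑ j, f j = ∑ j ∈ univ \ T, f j + ∑ j ∈ T, f j :=
    fun f => (Finset.sum_sdiff (subset_univ T)).symm
  rw [hsplit (Rvec m hm1s K), hsplit K]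
  have h1 : ∑ j ∈ univ \ T, Rvec m hm1s K j = ∑ j ∈ univ \ T, K j :=
    Finset.sum_congr rfl fun j hj => hout j (mem_sdiff.mp hj).2
  rw [h1]
  congr 1
  have hbne : jb ≠ jc := by simp [hjb, hjc, Fin.ext_iff]; omega
  have hbne' : jb ≠ je := by simp [hjb, hje, Fin.ext_iff]; omega
  rcases eq_or_lt_of_le hms with hmeq | hmlt
  · -- m = s : jc = je
    have hce : jc = je := by subst hmeq; rfl
    have hTe : T = {jb, jc} := by rw [hT, hce]; simp
    rw [hTe, Finset.sum_insert (by simpa using hbne), Finset.sum_singleton,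
      Finset.sum_insert (by simpa using hbne), Finset.sum_singleton]
    have e1 : Rvec m hm1s K jb = K jb + 1 := Rvec_b hm1s K hbs
    have e2 : Rvec m hm1s K jc = K jc - 1 := by
      conv_lhs => rw [hce]
      exact Rvec_last hm1s K hs hms hes
    rw [e1, e2]
    omega
  · -- m < s : all distinct
    have hcne : jc ≠ je := by simp [hjc, hje, Fin.ext_iff]; omega
    rw [hT, Finset.sum_insert (by simp [hbne, hbne']),
      Finset.sum_insert (by simpa using hcne), Finset.sum_singleton,
      Finset.sum_insert (by simp [hbne, hbne']),
      Finset.sum_insert (by simpa using hcne), Finset.sum_singleton]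
    have e1 : Rvec m hm1s K jb = K jb + 1 := Rvec_b hm1s K hbs
    have e2 : Rvec m hm1s K jc = 0 := Rvec_other _ _ (by simp [hjc]; omega) (by simp [hjc]; omega)
    have e3 : Rvec m hm1s K je = K jc - 1 := Rvec_last hm1s K hs hms hes
    have e4 : K je = 0 := hzero je (by simp [hje]; omega)
    rw [e1, e2, e3, e4]
    omega

lemma grlex_K_Rvec {s m : ℕ} (hs : 2 ≤ s) (hm2 : 2 ≤ m) (hms : m ≤ s) (hm1s : m - 1 < s)
    (K : Fin s → ℕ) (hzero : ∀ j : Fin s, m ≤ (j : ℕ) → K j = 0)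
    (hkm : 1 ≤ K ⟨m - 1, hm1s⟩) :
    GradedLexLt K (Rvec m hm1s K) := by
  have hbs : m - 2 < s := by omega
  refine Or.inr ⟨(sum_Rvec hs hm2 hms hm1s K hzero hkm).symm, ⟨m - 2, hbs⟩,
    fun u hu => (Rvec_lt hm1s K hu).symm, ?_⟩
  rw [Rvec_b hm1s K hbs]
  omega

lemma grlex_between {s m : ℕ} (hs : 2 ≤ s) (hm2 : 2 ≤ m) (hms : m ≤ s) (hm1s : m - 1 < s)
    (K : Fin s → ℕ) (hzero : ∀ j : Fin s, m ≤ (j : ℕ) → K j = 0)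
    (hkm : 1 ≤ K ⟨m - 1, hm1s⟩) (w : Fin s → ℕ)
    (h1 : GradedLexLt K w) (h2 : GradedLexLt w (Rvec m hm1s K)) : False := by
  have hbs : m - 2 < s := by omega
  have hes : s - 1 < s := by omega
  have hsum : ∑ j, Rvec m hm1s K j = ∑ j, K j := sum_Rvec hs hm2 hms hm1s K hzero hkm
  have hle1 := grlex_sum_le h1
  have hle2 := grlex_sum_le h2
  have hseq1 : ∑ j, K j = ∑ j, w j := by omega
  have hseq2 : ∑ j, w j = ∑ j, Rvec m hm1s K j := by omega
  rcases h1 with h1 | ⟨-, t1, hp1, ht1⟩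
  · omega
  rcases h2 with h2 | ⟨-, t2, hp2, ht2⟩
  · omega
  rcases Nat.lt_trichotomy (t1 : ℕ) (m - 2) with hc | hc | hc
  · -- t1 before m-2 : Rvec agrees with K there
    rcases lt_trichotomy t1 t2 with h | h | h
    · have e1 := hp2 t1 h
      have e2 := Rvec_lt hm1s K hc
      omega
    · subst h
      have e2 := Rvec_lt hm1s K hc
      omega
    · have e1 := hp1 t2 h
      have e2 := Rvec_lt hm1s K (show (t2 : ℕ) < m - 2 by
        have : (t2 : ℕ) < (t1 : ℕ) := h
        omega)
      omega
  · -- t1 = m-2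
    rcases lt_trichotomy t2 t1 with h | h | h
    · have e1 := hp1 t2 h
      have e2 := Rvec_lt hm1s K (show (t2 : ℕ) < m - 2 by
        have : (t2 : ℕ) < (t1 : ℕ) := h
        omega)
      omega
    · subst h
      have e2 : Rvec m hm1s K t2 = K t2 + 1 := by
        have : t2 = ⟨m - 2, hbs⟩ := Fin.ext hc
        rw [this, Rvec_b]
      omega
    · -- t1 < t2, so w = Rvec on u < t2, and w t2 < Rvec t2 forces t2 = s-1
      have ht2e : (t2 : ℕ) = s - 1 := by
        by_contra hne
        have : Rvec m hm1s K t2 = 0 := Rvec_other hm1s K (by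
          have : (t1 : ℕ) < (t2 : ℕ) := h
          omega) hne
        omega
      have hlt := sum_lt_of_lex w (Rvec m hm1s K) t2 hp2 ht2
        (fun u hu => by
          exfalso
          have h1 : (t2 : ℕ) < (u : ℕ) := hu
          have := u.isLt
          omega)
      omega
  · -- t1 after m-2 : K vanishes beyond t1
    have hlt := sum_lt_of_lex K w t1 hp1 ht1
      (fun u hu => hzero u (by
        have : (t1 : ℕ) < (u : ℕ) := hu
        omega))
    omega

lemma prod_split {s m : ℕ} (hs : 2 ≤ s) (hm2 : 2 ≤ m) (hms : m ≤ s) (hm1s : m - 1 < s)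
    (hbs : m - 2 < s) (hes : s - 1 < s) (h2s : m - 2 ≤ s)
    (K : Fin s → ℕ) (z : Fin s → ℂ) (η : Fin s → ℕ → ℂ) :
    ∏ t, ∏ i ∈ range (Rvec m hm1s K t), (z t - η t i)
      = (∏ j : Fin (m - 2), ∏ i ∈ range (K (Fin.castLE h2s j)),
          (z (Fin.castLE h2s j) - η (Fin.castLE h2s j) i))
        * (∏ i ∈ range (K ⟨m - 2, hbs⟩ + 1), (z ⟨m - 2, hbs⟩ - η ⟨m - 2, hbs⟩ i))
        * (∏ i ∈ range (K ⟨m - 1, hm1s⟩ - 1), (z ⟨s - 1, hes⟩ - η ⟨s - 1, hes⟩ i)) := by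
  classical
  set F : Fin s → ℂ := fun t => ∏ i ∈ range (Rvec m hm1s K t), (z t - η t i) with hF
  set jb : Fin s := ⟨m - 2, hbs⟩ with hjb
  set je : Fin s := ⟨s - 1, hes⟩ with hje
  set T1 : Finset (Fin s) := univ.filter (fun j : Fin s => (j : ℕ) < m - 2) with hT1
  have hjbje : jb ≠ je := by
    rw [hjb, hje]
    simp only [ne_eq, Fin.mk.injEq]
    omega
  have hjbT1 : jb ∉ T1 := by rw [hT1]; simp [hjb]
  have hjeT1 : je ∉ T1 := by rw [hT1]; simp [hje]; omega
  have step1 : ∏ t, F t = ∏ t ∈ insert jb (insert je T1), F t := by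
    refine (Finset.prod_subset (subset_univ _) ?_).symm
    intro x _ hx
    simp only [Finset.mem_insert, hT1, Finset.mem_filter, mem_univ, true_and, not_or] at hx
    obtain ⟨h1, h2, h3⟩ := hx
    have hb : (x : ℕ) ≠ m - 2 := fun h => h1 (by rw [hjb]; exact Fin.ext h)
    have he : (x : ℕ) ≠ s - 1 := fun h => h2 (by rw [hje]; exact Fin.ext h)
    have hR0 : Rvec m hm1s K x = 0 := Rvec_other hm1s K (by omega) he
    simp only [hF]
    rw [hR0]
    simp
  have step2 : ∏ t ∈ insert jb (insert je T1), F t = F jb * (F je * ∏ t ∈ T1, F t) := by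
    rw [Finset.prod_insert (by simp [hjbje, hjbT1]), Finset.prod_insert hjeT1]
  have stepb : F jb = ∏ i ∈ range (K jb + 1), (z jb - η jb i) := by
    simp only [hF]
    rw [Rvec_b hm1s K hbs]
  have stepe : F je = ∏ i ∈ range (K ⟨m - 1, hm1s⟩ - 1), (z je - η je i) := by
    simp only [hF]
    rw [Rvec_last hm1s K hs hms hes]
  have stepA : ∏ t ∈ T1, F t
      = ∏ j : Fin (m - 2), ∏ i ∈ range (K (Fin.castLE h2s j)),
          (z (Fin.castLE h2s j) - η (Fin.castLE h2s j) i) := by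
    have hRA : ∀ j : Fin (m - 2), Rvec m hm1s K (Fin.castLE h2s j) = K (Fin.castLE h2s j) :=
      fun j => Rvec_lt hm1s K (by simpa using j.isLt)
    refine (Finset.prod_bij (fun (j : Fin (m - 2)) _ => Fin.castLE h2s j) ?_ ?_ ?_ ?_).symm
    · intro a _
      rw [hT1]
      simp only [Finset.mem_filter, mem_univ, true_and]
      simpa using a.isLt
    · intro a _ a' _ h
      exact Fin.castLE_injective h2s h
    · intro b hb
      rw [hT1] at hb
      simp only [Finset.mem_filter, mem_univ, true_and] at hb
      exact ⟨⟨(b : ℕ), hb⟩, mem_univ _, Fin.ext rfl⟩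
    · intro a _
      simp only [hF]
      rw [hRA a]
  rw [step1, step2, stepb, stepe, stepA]
  ring

set_option maxHeartbeats 1000000 in
/-- if `binom(d+s,s) < N < binom(d+1+s,s)` and
`k(N) = (k_1,…,k_m,0,…,0)` with `2 ≤ m ≤ s`, `k_m ≥ 1`, then
`VDM(H_1,…,H_N,z) = ∏_{j=1}^{m−2} ∏_{i=0}^{k_j−1}(z_j − η^{(j)}_i)
  ⋅ ∏_{i=0}^{k_{m−1}}(z_{m−1} − η^{(m−1)}_i) ⋅ ∏_{i=0}^{k_m−2}(z_s − η^{(s)}_i)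
  ⋅ VDM(H_1,…,H_N)`.
Here `kEnum n` stands for the paper's `k(n+1)`, `H n` for `H_{n+1}`, and the paper's
(1-indexed) coordinate `k_j` is `kEnum (N-1) ⟨j-1⟩`. -/
theorem statement1 {s : ℕ} (hs : 2 ≤ s)
    (kEnum : ℕ → Fin s → ℕ) (hbij : Function.Bijective kEnum)
    (hmono : ∀ a b : ℕ, a < b → GradedLexLt (kEnum a) (kEnum b))
    (η : Fin s → ℕ → ℂ) (hdist : ∀ j, Function.Injective (η j))
    (H : ℕ → Fin s → ℂ) (hH : ∀ n j, H n j = η j (kEnum n j))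
    (d N : ℕ)
    (hlow : Nat.choose (d + s) s < N) (hhigh : N < Nat.choose (d + 1 + s) s)
    (m : ℕ) (hm2 : 2 ≤ m) (hms : m ≤ s)
    (hzero : ∀ j : Fin s, m ≤ (j : ℕ) → kEnum (N - 1) j = 0)
    (hkm : 1 ≤ kEnum (N - 1) ⟨m - 1, by omega⟩) :
    ∀ z : Fin s → ℂ,
      VDM kEnum (Fin.snoc (fun i : Fin N => H i) z) =
        (∏ j : Fin (m - 2),
            ∏ i ∈ range (kEnum (N - 1) (Fin.castLE (show m - 2 ≤ s by omega) j)),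
              (z (Fin.castLE (show m - 2 ≤ s by omega) j)
                - η (Fin.castLE (show m - 2 ≤ s by omega) j) i)) *
        (∏ i ∈ range (kEnum (N - 1) ⟨m - 2, by omega⟩ + 1),
            (z ⟨m - 2, by omega⟩ - η ⟨m - 2, by omega⟩ i)) *
        (∏ i ∈ range (kEnum (N - 1) ⟨m - 1, by omega⟩ - 1),
            (z ⟨s - 1, by omega⟩ - η ⟨s - 1, by omega⟩ i)) *
          VDM kEnum (fun i : Fin N => H i) := by
  intro z
  classical
  have hN1 : 1 ≤ N := by
    have := Nat.choose_pos (show s ≤ d + s by omega)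
    omega
  have hm1s : m - 1 < s := by omega
  have hbs : m - 2 < s := by omega
  have hes : s - 1 < s := by omega
  have h2s : m - 2 ≤ s := by omega
  set K : Fin s → ℕ := kEnum (N - 1) with hK
  set R : Fin s → ℕ := Rvec m hm1s K with hRdef
  have hKR : GradedLexLt K R := grlex_K_Rvec hs hm2 hms hm1s K hzero hkm
  have hreflect : ∀ a b : ℕ, GradedLexLt (kEnum a) (kEnum b) → a < b := by
    intro a b h
    rcases Nat.lt_trichotomy a b with h' | h' | h'
    · exact h'
    · subst h'; exact absurd h (grlex_irrefl _)
    · exact absurd h (fun h => grlex_asymm h (hmono b a h'))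
  have hRN : kEnum N = R := by
    obtain ⟨p, hp⟩ := hbij.2 R
    have hNp : N - 1 < p := hreflect _ _ (by rw [hp]; exact hKR)
    rcases Nat.lt_trichotomy p N with h | h | h
    · omega
    · rw [← h]; exact hp
    · exfalso
      have h1 : GradedLexLt K (kEnum N) := hmono (N - 1) N (by omega)
      have h2 : GradedLexLt (kEnum N) R := hp ▸ hmono N p h
      exact grlex_between hs hm2 hms hm1s K hzero hkm (kEnum N) h1 h2
  have hsumR : ∑ j, R j = ∑ j, K j := sum_Rvec hs hm2 hms hm1s K hzero hkm
  have hhit : ∀ n : ℕ, n < N → ∃ t : Fin s, kEnum n t < R t := by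
    intro n hn
    by_contra hcon
    push_neg at hcon
    have hsle : ∑ t, R t ≤ ∑ t, kEnum n t := Finset.sum_le_sum fun t _ => hcon t
    rcases Nat.lt_trichotomy n (N - 1) with h | h | h
    · have hg : GradedLexLt (kEnum n) K := hmono n (N - 1) h
      have hsle2 := grlex_sum_le hg
      have hseq : ∑ t, R t = ∑ t, kEnum n t := by omega
      have heqf := (Finset.sum_eq_sum_iff_of_le (fun t (_ : t ∈ univ) => hcon t)).mp hseq
      have heq : kEnum n = R := funext fun t => (heqf t (mem_univ t)).symm
      rw [heq] at hg
      exact grlex_asymm hg hKR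
    · have hc := hcon ⟨m - 2, hbs⟩
      rw [hRdef, Rvec_b hm1s K hbs, h, ← hK] at hc
      omega
    · omega
  -- expansion of the linear-factor products
  have hexp : ∀ j : Fin s, ∃ c : ℕ → ℂ, c (R j) = 1 ∧
      ∀ x : ℂ, ∏ i ∈ range (R j), (x - η j i) = ∑ a ∈ range (R j + 1), c a * x ^ a :=
    fun j => expand_linear (η j) (R j)
  choose c hc1 hceval using hexp
  set S : Finset (Fin s → ℕ) := Fintype.piFinset (fun j => range (R j + 1)) with hS
  set q : (Fin s → ℕ) → ℂ := fun p => ∏ j, c j (p j) with hq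
  have hqexp : ∀ w : Fin s → ℂ,
      ∏ j, ∏ i ∈ range (R j), (w j - η j i) = ∑ p ∈ S, q p * ∏ j, w j ^ p j := by
    intro w
    calc ∏ j, ∏ i ∈ range (R j), (w j - η j i)
        = ∏ j, ∑ a ∈ range (R j + 1), c j a * w j ^ a :=
          Finset.prod_congr rfl fun j _ => hceval j (w j)
      _ = ∑ p ∈ S, ∏ j, (c j (p j) * w j ^ p j) := Finset.prod_univ_sum _ _
      _ = ∑ p ∈ S, q p * ∏ j, w j ^ p j :=
          Finset.sum_congr rfl fun p _ => by
            rw [hq]; exact Finset.prod_mul_distrib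
  have hRS : R ∈ S := by
    rw [hS, Fintype.mem_piFinset]
    intro j
    exact Finset.self_mem_range_succ _
  have hqR : q R = 1 := by rw [hq]; exact Finset.prod_eq_one fun j _ => hc1 j
  set E := Equiv.ofBijective kEnum hbij with hE
  have hEk : ∀ p : Fin s → ℕ, kEnum (E.symm p) = p := fun p => E.apply_symm_apply p
  have hplt : ∀ p ∈ S.erase R, (E.symm p : ℕ) < N := by
    intro p hp
    obtain ⟨hne, hpS⟩ := Finset.mem_erase.mp hp
    have hple : ∀ j, p j ≤ R j := by
      intro j
      rw [hS] at hpS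
      exact Nat.lt_succ_iff.mp (Finset.mem_range.mp (Fintype.mem_piFinset.mp hpS j))
    obtain ⟨j0, hj0⟩ := Function.ne_iff.mp hne
    have hslt : ∑ j, p j < ∑ j, R j :=
      Finset.sum_lt_sum (fun i _ => hple i) ⟨j0, mem_univ j0, lt_of_le_of_ne (hple j0) hj0⟩
    have hgp : GradedLexLt p (kEnum N) := by rw [hRN]; exact Or.inl hslt
    by_contra hge
    push_neg at hge
    rcases eq_or_lt_of_le hge with h | h
    · exact hne (by rw [← hEk p, ← h]; exact hRN)
    · have hmn := hmono N (E.symm p) h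
      rw [hEk] at hmn
      exact grlex_asymm hgp hmn
  -- the matrix and the modified last row
  set G : Fin (N + 1) → Fin s → ℂ := Fin.snoc (fun i : Fin N => H i) z with hG
  set M : Matrix (Fin (N + 1)) (Fin (N + 1)) ℂ :=
    Matrix.of (fun i j : Fin (N + 1) => ∏ t, G j t ^ kEnum (i : ℕ) t) with hM
  set v : Fin (N + 1) → ℂ := fun j => ∏ t, ∏ i ∈ range (R t), (G j t - η t i) with hv
  set rowOf : (Fin s → ℕ) → Fin (N + 1) :=
    fun p => ⟨min (E.symm p) N, Nat.lt_succ_of_le (Nat.min_le_right _ _)⟩ with hrowOf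
  set ts : Finset (Fin (N + 1)) := (S.erase R).image rowOf with hts
  set cRow : Fin (N + 1) → ℂ := fun i => q (kEnum (i : ℕ)) with hcRow
  have hrow_val : ∀ p ∈ S.erase R, (rowOf p : ℕ) = E.symm p := by
    intro p hp
    rw [hrowOf]
    exact min_eq_left (le_of_lt (hplt p hp))
  have hlast_not : Fin.last N ∉ ts := by
    intro hmem
    rw [hts] at hmem
    obtain ⟨p, hp, hpe⟩ := Finset.mem_image.mp hmem
    have h1 := hrow_val p hp
    have h2 := hplt p hp
    have h3 := congrArg Fin.val hpe
    rw [h1, Fin.val_last] at h3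
    omega
  have key : M (Fin.last N) + ∑ i ∈ ts, cRow i • M i = v := by
    funext j
    have hinj : ∀ p ∈ S.erase R, ∀ p' ∈ S.erase R, rowOf p = rowOf p' → p = p' := by
      intro p hp p' hp' hpe
      have h1 := hrow_val p hp
      have h2 := hrow_val p' hp'
      have h3 := congrArg Fin.val hpe
      rw [h1, h2] at h3
      exact E.symm.injective h3
    have e0 : M (Fin.last N) j = ∏ t, G j t ^ R t := by
      rw [hM]
      simp only [Matrix.of_apply, Fin.val_last, hRN]
    have e1 : ∀ p ∈ S.erase R, cRow (rowOf p) * M (rowOf p) j = q p * ∏ t, G j t ^ p t := by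
      intro p hp
      have h1 := hrow_val p hp
      simp only [hcRow, hM, Matrix.of_apply]
      rw [h1, hEk]
    simp only [Pi.add_apply, Finset.sum_apply, Pi.smul_apply, smul_eq_mul]
    rw [hts, Finset.sum_image hinj]
    calc M (Fin.last N) j + ∑ p ∈ S.erase R, cRow (rowOf p) * M (rowOf p) j
        = q R * ∏ t, G j t ^ R t + ∑ p ∈ S.erase R, q p * ∏ t, G j t ^ p t := by
          rw [e0, hqR, one_mul]
          exact congrArg _ (Finset.sum_congr rfl e1)
      _ = ∑ p ∈ S, q p * ∏ t, G j t ^ p t :=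
          Finset.add_sum_erase S (fun p => q p * ∏ t, G j t ^ p t) hRS
      _ = v j := (hqexp (G j)).symm
  have haux := Matrix.det_updateRow_sum_aux M ts hlast_not cRow 1
  rw [one_smul, one_smul, key] at haux
  have hveval0 : ∀ j' : Fin N, v (Fin.castSucc j') = 0 := by
    intro j'
    obtain ⟨t0, ht0⟩ := hhit j' j'.isLt
    have hGc : G (Fin.castSucc j') = H j' := by rw [hG]; exact Fin.snoc_castSucc _ _ _
    simp only [hv]
    refine Finset.prod_eq_zero (mem_univ t0) ?_
    refine Finset.prod_eq_zero (Finset.mem_range.mpr ht0) ?_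
    rw [hGc, hH]
    exact sub_self _
  have hvlast : v (Fin.last N) = ∏ t, ∏ i ∈ range (R t), (z t - η t i) := by
    simp only [hv]
    have : G (Fin.last N) = z := by rw [hG]; exact Fin.snoc_last _ _
    rw [this]
  have hdet2 : (M.updateRow (Fin.last N) v).det
      = v (Fin.last N) * VDM kEnum (fun i : Fin N => H i) := by
    rw [Matrix.det_succ_row _ (Fin.last N)]
    have h0 : ∀ b ∈ (univ : Finset (Fin (N + 1))), b ≠ Fin.last N →
        (-1 : ℂ) ^ ((Fin.last N : ℕ) + (b : ℕ)) * (M.updateRow (Fin.last N) v) (Fin.last N) b *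
          ((M.updateRow (Fin.last N) v).submatrix (Fin.last N).succAbove b.succAbove).det = 0 := by
      intro b _ hb
      obtain ⟨b', hb'⟩ := Fin.exists_castSucc_eq.mpr hb
      rw [Matrix.updateRow_self, ← hb', hveval0 b']
      ring
    rw [Finset.sum_eq_single (Fin.last N) h0 (fun h => absurd (mem_univ _) h)]
    have hsub : (M.updateRow (Fin.last N) v).submatrix
        (Fin.last N).succAbove (Fin.last N).succAbove
        = Matrix.of (fun i j : Fin N => ∏ t, H (j : ℕ) t ^ kEnum (i : ℕ) t) := by
      ext i j
      simp only [Matrix.submatrix_apply, Fin.succAbove_last]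
      rw [Matrix.updateRow_ne (Fin.castSucc_lt_last i).ne]
      rw [hM]
      simp only [Matrix.of_apply, Fin.coe_castSucc]
      refine Finset.prod_congr rfl fun t _ => ?_
      rw [hG, Fin.snoc_castSucc]
    rw [Matrix.updateRow_self, hsub, Fin.val_last]
    rw [show ((-1 : ℂ)) ^ (N + N) = 1 from Even.neg_one_pow ⟨N, rfl⟩, one_mul]
    unfold VDM
    rfl
  -- put the determinant computations together
  have hVDMM : VDM kEnum G = M.det := by
    unfold VDM
    rw [hM]
  rw [hVDMM, ← haux, hdet2, hvlast]
  -- now the product splitting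
  congr 1
  exact prod_split hs hm2 hms hm1s hbs hes h2s K z η
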